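/- Let G be a topological group whose underlying space is T1, and let Γ ⊆ G be a nonempty finite subset. Then there exists an open neighborhood C of the identity e in G with the following property: if g₁, g₂ ∈ C and γ ∈ Γ are such that g₁⁻¹ γ g₂ ∈ Γ, then g₁⁻¹ γ g₂ = γ. -/

import Mathlib

/-- Lemma 4.3: if `G` is a T1 topological group and `Γ ⊆ G` is a nonempty finite subset,
then there is an open neighborhood `C` of the identity such that for `g₁, g₂ ∈ C` and
`γ ∈ Γ`, `g₁⁻¹ * γ * g₂ ∈ Γ` forces `g₁⁻¹ * γ * g₂ = γ`. -/
theorem stmt_7 {G : Type*} [Group G] [TopologicalSpace G] [IsTopologicalGroup G] [T1Space G]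
    (Γ : Set G) (hfin : Γ.Finite) (hne : Γ.Nonempty) :
    ∃ C : Set G, IsOpen C ∧ (1 : G) ∈ C ∧
      ∀ g₁ ∈ C, ∀ g₂ ∈ C, ∀ γ ∈ Γ, g₁⁻¹ * γ * g₂ ∈ Γ → g₁⁻¹ * γ * g₂ = γ := by
  have hev : ∀ᶠ p : G × G in nhds ((1 : G), (1 : G)),
      ∀ γ ∈ Γ, ∀ γ' ∈ Γ, γ' ≠ γ → p.1⁻¹ * γ * p.2 ≠ γ' := by
    rw [Filter.eventually_all_finite hfin]
    intro γ hγ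
    rw [Filter.eventually_all_finite hfin]
    intro γ' hγ'
    rcases eq_or_ne γ' γ with h | h
    · exact Filter.Eventually.of_forall fun p hp => absurd h hp
    · have hcont : Continuous fun p : G × G => p.1⁻¹ * γ * p.2 := by
        continuity
      have h1 : (fun p : G × G => p.1⁻¹ * γ * p.2) (1, 1) = γ := by simp
      have hopen : IsOpen {x : G | x ≠ γ'} := isOpen_ne
      have := hcont.continuousAt (x := ((1 : G), (1 : G)))
        (hopen.mem_nhds (by simp [h1]; exact fun hc => h hc.symm))
      filter_upwards [this] with p hp _ using hp
  rw [nhds_prod_eq, Filter.eventually_prod_iff] at hev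
  obtain ⟨pa, hpa, pb, hpb, hab⟩ := hev
  obtain ⟨U, hUsub, hUopen, hU1⟩ := mem_nhds_iff.mp hpa
  obtain ⟨V, hVsub, hVopen, hV1⟩ := mem_nhds_iff.mp hpb
  refine ⟨U ∩ V, hUopen.inter hVopen, ⟨hU1, hV1⟩, ?_⟩
  rintro g₁ ⟨h1U, _⟩ g₂ ⟨_, h2V⟩ γ hγ hmem
  by_contra hne'
  exact hab (hUsub h1U) (hVsub h2V) γ hγ _ hmem hne' rfl
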